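/- For every λ ∈ (0,1), the λ-version discounted state distribution d_π^{λ} is a probability distribution on S (nonnegative entries summing to 1) and admits the matrix form d_π^{λ} = (1-γ̃) · ((I - γ̃ P_π^{(λ)})^{-1})^T ρ0, i.e., d_π^{λ}[s] = (1-γ̃) Σ_{s0} ρ0(s0) ((I - γ̃ P_π^{(λ)})^{-1})[s0,s]. -/

import Mathlib

set_option maxHeartbeats 1000000

/-- Powers of a row-stochastic matrix are row-stochastic. -/
lemma stoch_pow {S : Type*} [Fintype S] [DecidableEq S] (M : Matrix S S ℝ)
    (h0 : ∀ i j, 0 ≤ M i j) (h1 : ∀ i, ∑ j, M i j = 1) (n : ℕ) :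
    (∀ i j, 0 ≤ (M ^ n) i j) ∧ (∀ i, ∑ j, (M ^ n) i j = 1) := by
  induction n with
  | zero =>
    constructor
    · intro i j
      simp [Matrix.one_apply]
      split <;> norm_num
    · intro i
      simp [Matrix.one_apply]
  | succ n ih =>
    have hmul : ∀ i j, (M ^ (n+1)) i j = ∑ k, (M ^ n) i k * M k j := by
      intro i j
      rw [pow_succ, Matrix.mul_apply]
    constructor
    · intro i j
      rw [hmul]
      exact Finset.sum_nonneg fun k _ => mul_nonneg (ih.1 i k) (h0 k j)
    · intro i
      simp_rw [hmul]
      rw [Finset.sum_comm]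
      calc ∑ k, ∑ j, (M ^ n) i k * M k j
          = ∑ k, (M ^ n) i k * ∑ j, M k j := by simp [Finset.mul_sum]
        _ = 1 := by simp [h1, ih.2 i]

/-- The λ-version discounted state distribution `d_π^{λ}` is a probability
distribution on `S` and satisfies
`d_π^{λ}[s] = (1-γ̃) ∑_{s0} ρ0(s0) ((I - γ̃ P_π^{(λ)})⁻¹)[s0,s]`. -/
theorem lambda_discounted_state_distribution
    {S A : Type*} [Fintype S] [Nonempty S] [DecidableEq S] [Fintype A] [Nonempty A]
    (P : S → A → S → ℝ)
    (hP0 : ∀ s a s', 0 ≤ P s a s')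
    (hP1 : ∀ s a, ∑ s', P s a s' = 1)
    (γ : ℝ) (hγ0 : 0 < γ) (hγ1 : γ < 1)
    (π : S → A → ℝ)
    (hπ0 : ∀ s a, 0 ≤ π s a)
    (hπ1 : ∀ s, ∑ a, π s a = 1)
    (Pπ : Matrix S S ℝ)
    (hPπ : ∀ s s', Pπ s s' = ∑ a, π s a * P s a s')
    (lam : ℝ) (hlam0 : 0 < lam) (hlam1 : lam < 1)
    (tγ : ℝ) (htγ : tγ = γ * (1 - lam) / (1 - γ * lam))
    (Plam : Matrix S S ℝ)
    (hPlam : Plam = (1 - γ * lam) • ∑' t : ℕ, (γ * lam) ^ t • Pπ ^ (t + 1))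
    (ρ0 : S → ℝ)
    (hρ0 : ∀ s, 0 ≤ ρ0 s)
    (hρ1 : ∑ s, ρ0 s = 1)
    (dlam : S → ℝ)
    (hdlam : ∀ s, dlam s = (1 - tγ) * ∑' t : ℕ, tγ ^ t * ∑ s0, ρ0 s0 * (Plam ^ t) s0 s) :
    (∀ s, 0 ≤ dlam s) ∧
    (∑ s, dlam s = 1) ∧
    ∀ s, dlam s = (1 - tγ) * ∑ s0, ρ0 s0 * (1 - tγ • Plam)⁻¹ s0 s := by
  -- basic scalar facts
  have hgl0 : 0 < γ * lam := mul_pos hγ0 hlam0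
  have hgl1 : γ * lam < 1 := by nlinarith
  have hden : 0 < 1 - γ * lam := by linarith
  have htγ0 : 0 < tγ := by
    rw [htγ]
    apply div_pos (by nlinarith) hden
  have htγ1 : tγ < 1 := by
    rw [htγ, div_lt_one hden]; nlinarith
  -- Pπ is stochastic
  have hPπ0 : ∀ i j, 0 ≤ Pπ i j := fun i j => by
    rw [hPπ]; exact Finset.sum_nonneg fun a _ => mul_nonneg (hπ0 i a) (hP0 i a j)
  have hPπ1 : ∀ i, ∑ j, Pπ i j = 1 := fun i => by
    simp_rw [hPπ]
    rw [Finset.sum_comm]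
    calc ∑ a, ∑ j, π i a * P i a j = ∑ a, π i a * ∑ j, P i a j := by
          simp [Finset.mul_sum]
      _ = 1 := by simp [hP1, hπ1 i]
  have hPπpow := stoch_pow Pπ hPπ0 hPπ1
  -- entrywise Plam via tsum_apply
  have hsum1' : ∀ i j, Summable fun t : ℕ => (γ * lam) ^ t * (Pπ ^ (t + 1)) i j := by
    intro i j
    refine Summable.of_nonneg_of_le (fun t => ?_) (fun t => ?_)
      (summable_geometric_of_lt_one hgl0.le hgl1)
    · exact mul_nonneg (pow_nonneg hgl0.le t) ((hPπpow (t+1)).1 i j)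
    · have hle : (Pπ ^ (t+1)) i j ≤ 1 := by
        calc (Pπ ^ (t+1)) i j ≤ ∑ k, (Pπ ^ (t+1)) i k :=
              Finset.single_le_sum (fun k _ => (hPπpow (t+1)).1 i k) (Finset.mem_univ j)
          _ = 1 := (hPπpow (t+1)).2 i
      calc (γ * lam) ^ t * (Pπ ^ (t+1)) i j
          ≤ (γ * lam) ^ t * 1 :=
            mul_le_mul_of_nonneg_left hle (pow_nonneg hgl0.le t)
        _ = (γ * lam) ^ t := mul_one _
  have hsum1 : ∀ i j, Summable fun t : ℕ => ((γ * lam) ^ t • Pπ ^ (t + 1)) i j := by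
    intro i j
    simpa only [Matrix.smul_apply, smul_eq_mul] using hsum1' i j
  have hsumM : Summable fun t : ℕ => (γ * lam) ^ t • Pπ ^ (t + 1) :=
    Pi.summable.mpr fun i => Pi.summable.mpr fun j => hsum1 i j
  have hPlam' : ∀ i j, Plam i j = (1 - γ * lam) * ∑' t : ℕ, (γ * lam) ^ t * (Pπ ^ (t+1)) i j := by
    intro i j
    rw [hPlam]
    have h1 : (∑' t : ℕ, (γ * lam) ^ t • Pπ ^ (t + 1)) i j
        = ∑' t : ℕ, ((γ * lam) ^ t • Pπ ^ (t + 1)) i j := by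
      have e1 := tsum_apply (f := fun t : ℕ => ((γ * lam) ^ t • Pπ ^ (t + 1) : S → S → ℝ)) (x := i) hsumM
      have e2 := tsum_apply (x := j) (Pi.summable.mpr fun j => hsum1 i j)
      exact (congrFun e1 j).trans e2
    rw [Matrix.smul_apply, h1, smul_eq_mul]
    simp only [Matrix.smul_apply, smul_eq_mul]
  -- Plam is stochastic
  have hPlam0 : ∀ i j, 0 ≤ Plam i j := by
    intro i j
    rw [hPlam' i j]
    refine mul_nonneg hden.le (tsum_nonneg fun t => ?_)
    exact mul_nonneg (pow_nonneg hgl0.le t) ((hPπpow (t+1)).1 i j)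
  have hPlam1 : ∀ i, ∑ j, Plam i j = 1 := by
    intro i
    simp_rw [hPlam' i]
    rw [← Finset.mul_sum]
    rw [← Summable.tsum_finsetSum (fun j _ => (hsum1' i j))]
    have : ∀ t : ℕ, ∑ j, (γ * lam) ^ t * (Pπ ^ (t+1)) i j = (γ * lam) ^ t := by
      intro t
      rw [← Finset.mul_sum, (hPπpow (t+1)).2 i, mul_one]
    simp_rw [this]
    rw [tsum_geometric_of_lt_one hgl0.le hgl1]
    rw [mul_inv_cancel₀ (ne_of_gt hden)]
  have hPlampow := stoch_pow Plam hPlam0 hPlam1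
  -- summability of the d-series entries
  have hentry : ∀ (n : ℕ) i j, (Plam ^ n) i j ≤ 1 := by
    intro n i j
    calc (Plam ^ n) i j ≤ ∑ k, (Plam ^ n) i k :=
          Finset.single_le_sum (fun k _ => (hPlampow n).1 i k) (Finset.mem_univ j)
      _ = 1 := (hPlampow n).2 i
  have hsum2 : ∀ i j, Summable fun t : ℕ => tγ ^ t * (Plam ^ t) i j := by
    intro i j
    refine Summable.of_nonneg_of_le (fun t => ?_) (fun t => ?_)
      (summable_geometric_of_lt_one htγ0.le htγ1)
    · exact mul_nonneg (pow_nonneg htγ0.le t) ((hPlampow t).1 i j)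
    · calc tγ ^ t * (Plam ^ t) i j ≤ tγ ^ t * 1 :=
            mul_le_mul_of_nonneg_left (hentry t i j) (pow_nonneg htγ0.le t)
        _ = tγ ^ t := mul_one _
  have hsum3 : ∀ i j, Summable fun t : ℕ => tγ ^ t * (Plam ^ (t + 1)) i j := by
    intro i j
    refine Summable.of_nonneg_of_le (fun t => ?_) (fun t => ?_)
      (summable_geometric_of_lt_one htγ0.le htγ1)
    · exact mul_nonneg (pow_nonneg htγ0.le t) ((hPlampow (t+1)).1 i j)
    · calc tγ ^ t * (Plam ^ (t+1)) i j ≤ tγ ^ t * 1 :=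
            mul_le_mul_of_nonneg_left (hentry (t+1) i j) (pow_nonneg htγ0.le t)
        _ = tγ ^ t := mul_one _
  have hsumd : ∀ s, Summable fun t : ℕ => tγ ^ t * ∑ s0, ρ0 s0 * (Plam ^ t) s0 s := by
    intro s
    have : ∀ t : ℕ, tγ ^ t * ∑ s0, ρ0 s0 * (Plam ^ t) s0 s
        = ∑ s0, ρ0 s0 * (tγ ^ t * (Plam ^ t) s0 s) := by
      intro t; rw [Finset.mul_sum]; congr 1; ext s0; ring
    simp_rw [this]
    exact summable_sum fun s0 _ => (hsum2 s0 s).mul_left (ρ0 s0)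
  -- nonnegativity
  have hd0 : ∀ s, 0 ≤ dlam s := by
    intro s
    rw [hdlam s]
    refine mul_nonneg (by linarith) (tsum_nonneg fun t => ?_)
    exact mul_nonneg (pow_nonneg htγ0.le t)
      (Finset.sum_nonneg fun s0 _ => mul_nonneg (hρ0 s0) ((hPlampow t).1 s0 s))
  -- sums to one
  have hd1 : ∑ s, dlam s = 1 := by
    simp_rw [hdlam]
    rw [← Finset.mul_sum, ← Summable.tsum_finsetSum (fun s _ => hsumd s)]
    have : ∀ t : ℕ, ∑ s, tγ ^ t * ∑ s0, ρ0 s0 * (Plam ^ t) s0 s = tγ ^ t := by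
      intro t
      rw [← Finset.mul_sum, Finset.sum_comm]
      have : ∑ s0, ∑ s, ρ0 s0 * (Plam ^ t) s0 s = 1 := by
        calc ∑ s0, ∑ s, ρ0 s0 * (Plam ^ t) s0 s
            = ∑ s0, ρ0 s0 * ∑ s, (Plam ^ t) s0 s := by simp [Finset.mul_sum]
          _ = 1 := by simp [(hPlampow _).2, hρ1]
      rw [this, mul_one]
    simp_rw [this]
    rw [tsum_geometric_of_lt_one htγ0.le htγ1]
    rw [mul_inv_cancel₀ (ne_of_gt (by linarith : (0:ℝ) < 1 - tγ))]
  -- the resolvent matrix M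
  set M : Matrix S S ℝ := Matrix.of fun i j => ∑' t : ℕ, tγ ^ t * (Plam ^ t) i j with hM
  have hMapp : ∀ i j, M i j = ∑' t : ℕ, tγ ^ t * (Plam ^ t) i j := fun i j => rfl
  have hinv : (1 - tγ • Plam)⁻¹ = M := by
    apply Matrix.inv_eq_right_inv
    ext i j
    have hmulapp : ((1 - tγ • Plam) * M) i j = M i j - tγ * ∑ k, Plam i k * M k j := by
      rw [Matrix.sub_mul, Matrix.one_mul, Matrix.sub_apply]
      congr 1
      rw [Matrix.smul_mul, Matrix.smul_apply, Matrix.mul_apply, smul_eq_mul]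
    rw [hmulapp]
    have hstep : ∑ k, Plam i k * M k j = ∑' t : ℕ, tγ ^ t * (Plam ^ (t+1)) i j := by
      simp_rw [hMapp, ← tsum_mul_left]
      rw [← Summable.tsum_finsetSum (fun k _ => ((hsum2 k j).mul_left (Plam i k)))]
      congr 1
      ext t
      have : (Plam ^ (t+1)) i j = ∑ k, Plam i k * (Plam ^ t) k j := by
        rw [pow_succ', Matrix.mul_apply]
      rw [this, Finset.mul_sum]
      congr 1; ext k; ring
    rw [hstep, hMapp]
    have hshift : ∑' t : ℕ, tγ ^ t * (Plam ^ t) i j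
        = tγ ^ 0 * (Plam ^ 0) i j + ∑' t : ℕ, tγ ^ (t+1) * (Plam ^ (t+1)) i j := by
      exact Summable.tsum_eq_zero_add (hsum2 i j)
    rw [hshift]
    have : ∑' t : ℕ, tγ ^ (t+1) * (Plam ^ (t+1)) i j
        = tγ * ∑' t : ℕ, tγ ^ t * (Plam ^ (t+1)) i j := by
      rw [← Summable.tsum_mul_left _ (hsum3 i j)]
      congr 1; ext t; ring
    rw [this]
    rw [pow_zero, one_mul, add_sub_cancel_right, pow_zero]
  refine ⟨hd0, hd1, fun s => ?_⟩
  rw [hdlam s, hinv]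
  congr 1
  have : ∀ t : ℕ, tγ ^ t * ∑ s0, ρ0 s0 * (Plam ^ t) s0 s
      = ∑ s0, ρ0 s0 * (tγ ^ t * (Plam ^ t) s0 s) := by
    intro t; rw [Finset.mul_sum]; congr 1; ext s0; ring
  simp_rw [this]
  rw [Summable.tsum_finsetSum (fun s0 _ => ((hsum2 s0 s).mul_left (ρ0 s0)))]
  congr 1
  ext s0
  rw [Summable.tsum_mul_left _ (hsum2 s0 s), hMapp]
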